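/- If {a_n}, {b_n}, {c_n} are sequences of nonnegative real numbers satisfying a_{n+1} ≤ (1 + b_n) a_n + c_n for all n, and the series ∑ b_n and ∑ c_n converge, then the limit of a_n exists (i.e., {a_n} converges). -/

import Mathlib

open Filter Finset

theorem stmt_0 (a b c : ℕ → ℝ)
    (ha : ∀ n, 0 ≤ a n) (hb : ∀ n, 0 ≤ b n) (hc : ∀ n, 0 ≤ c n)
    (hrec : ∀ n, a (n + 1) ≤ (1 + b n) * a n + c n)
    (hbs : Summable b) (hcs : Summable c) :
    ∃ l : ℝ, Filter.Tendsto a Filter.atTop (nhds l) := by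
  set P : ℕ → ℝ := fun n => ∏ k ∈ Finset.range n, (1 + b k) with hP
  have hP1 : ∀ n, 1 ≤ P n := by
    intro n
    simp only [hP]
    induction n with
    | zero => simp
    | succ m ih =>
      rw [Finset.prod_range_succ]
      nlinarith [hb m]
  have hPpos : ∀ n, 0 < P n := fun n => lt_of_lt_of_le one_pos (hP1 n)
  have hPmono : Monotone P := by
    apply monotone_nat_of_le_succ
    intro n
    have : P (n + 1) = P n * (1 + b n) := Finset.prod_range_succ _ n
    rw [this]
    nlinarith [hPpos n, hb n]
  have hPbdd : ∀ n, P n ≤ Real.exp (∑' k, b k) := by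
    intro n
    calc P n ≤ ∏ k ∈ Finset.range n, Real.exp (b k) := by
            apply Finset.prod_le_prod
            · intro k _; linarith [hb k]
            · intro k _; linarith [Real.add_one_le_exp (b k)]
      _ = Real.exp (∑ k ∈ Finset.range n, b k) := by rw [Real.exp_sum]
      _ ≤ Real.exp (∑' k, b k) := by
            apply Real.exp_le_exp.mpr
            exact Summable.sum_le_tsum _ (fun k _ => hb k) hbs
  -- P converges
  have hPlim : ∃ Pl : ℝ, Tendsto P atTop (nhds Pl) := by
    refine ⟨⨆ n, P n, tendsto_atTop_ciSup hPmono ⟨Real.exp (∑' k, b k), ?_⟩⟩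
    rintro x ⟨n, rfl⟩; exact hPbdd n
  obtain ⟨Pl, hPl⟩ := hPlim
  -- u n = a n / P n
  set u : ℕ → ℝ := fun n => a n / P n with hu
  have hustep : ∀ n, u (n + 1) ≤ u n + c n := by
    intro n
    have hPs : P (n + 1) = P n * (1 + b n) := Finset.prod_range_succ _ n
    have h1 : u (n + 1) ≤ ((1 + b n) * a n + c n) / P (n + 1) :=
      (div_le_div_iff_of_pos_right (hPpos (n+1))).mpr (hrec n)
    have hbn : (0:ℝ) < 1 + b n := by linarith [hb n]
    have h0 : P n ≠ 0 := (hPpos n).ne'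
    have hbn' : (1 + b n) ≠ 0 := hbn.ne'
    have h2 : ((1 + b n) * a n + c n) / P (n + 1) = a n / P n + c n / P (n + 1) := by
      rw [hPs]
      field_simp
    have h3 : c n / P (n + 1) ≤ c n := by
      rw [div_le_iff₀ (hPpos (n+1))]
      nlinarith [hP1 (n+1), hc n]
    calc u (n+1) ≤ a n / P n + c n / P (n + 1) := by rw [← h2]; exact h1
      _ ≤ u n + c n := by exact add_le_add_right h3 _
  -- tail of c
  set t : ℕ → ℝ := fun n => ∑' k, c (n + k) with ht
  have htsummable : ∀ n, Summable fun k => c (n + k) := by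
    intro n
    have := (summable_nat_add_iff n).mpr hcs
    simpa [add_comm] using this
  have htstep : ∀ n, t n = c n + t (n + 1) := by
    intro n
    simp only [ht]
    rw [Summable.tsum_eq_zero_add (htsummable n)]
    congr 1
    apply tsum_congr
    intro k
    congr 1
    omega
  have htzero : Tendsto t atTop (nhds 0) := by
    have := tendsto_sum_nat_add c
    simpa [ht, add_comm] using this
  set v : ℕ → ℝ := fun n => u n + t n with hv
  have hvanti : Antitone v := by
    apply antitone_nat_of_succ_le
    intro n
    have := hustep n
    have h2 := htstep n
    simp only [hv]
    linarith
  have hvbdd : BddBelow (Set.range v) := by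
    refine ⟨0, ?_⟩
    rintro x ⟨n, rfl⟩
    have h1 : 0 ≤ u n := div_nonneg (ha n) (hPpos n).le
    have h2 : 0 ≤ t n := tsum_nonneg (fun k => hc _)
    simp only [hv]; linarith
  have hvlim : Tendsto v atTop (nhds (⨅ n, v n)) := tendsto_atTop_ciInf hvanti hvbdd
  have hulim : Tendsto u atTop (nhds (⨅ n, v n)) := by
    have : u = fun n => v n - t n := by funext n; simp [hv]
    rw [this]
    simpa using hvlim.sub htzero
  refine ⟨(⨅ n, v n) * Pl, ?_⟩
  have : a = fun n => u n * P n := by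
    funext n
    simp only [hu]
    exact (div_mul_cancel₀ (a n) (hPpos n).ne').symm
  rw [this]
  exact hulim.mul hPl
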